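/- arXiv:2009.12686 — 2 statements merged into one kernel-verified Lean document; each statement's English description precedes it below -/
import Mathlib

section
/- Let A be a symmetric positive semidefinite r×r real matrix, let u, w ∈ ℝ^r with s₀ := uᵀ A u > 0, and let (p_v)_{v≥0} be a sequence of reals with 0 ≤ p_v ≤ 1 for all v. Define q(ε) = (u + ε·w)ᵀ A (u + ε·w) and β(ε) = Σ_{v=0}^∞ (q(ε)/2)^v / v! · e^{−q(ε)/2} · p_v. Then β is differentiable at ε = 0 and β'(0) = C*(s₀) · (uᵀ A w), where C*(s) = e^{−s/2} · Σ_{v=0}^∞ s^{v−1} · 2^{−v} · (2v − s) · p_v / v!. -/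
open Filter Topology Matrix

lemma summable_aux (x : ℝ) :
    Summable (fun v : ℕ => (v : ℝ) * x ^ (v - 1) / v.factorial) := by
  rw [← summable_nat_add_iff 1]
  have h : (fun n : ℕ => (fun v : ℕ => (v : ℝ) * x ^ (v - 1) / v.factorial) (n + 1)) =
      fun n : ℕ => x ^ n / n.factorial := by
    funext n
    simp only [Nat.factorial_succ, Nat.add_sub_cancel]
    push_cast
    have h1 : ((n:ℝ) + 1) ≠ 0 := by positivity
    have h2 : (n.factorial : ℝ) ≠ 0 := by positivity
    field_simp
  rw [h]
  exact Real.summable_pow_div_factorial x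

lemma tsum_deriv_general (p : ℕ → ℝ) (hp : ∀ v, 0 ≤ p v ∧ p v ≤ 1)
    (Q Q' : ℝ → ℝ) (hQd : ∀ ε, HasDerivAt Q (Q' ε) ε)
    (hQnn : ∀ ε, 0 ≤ Q ε) (B C : ℝ)
    (hQB : ∀ ε ∈ Metric.ball (0:ℝ) 1, Q ε ≤ B)
    (hQ'C : ∀ ε ∈ Metric.ball (0:ℝ) 1, |Q' ε| ≤ C) :
    HasDerivAt
      (fun ε : ℝ => ∑' v : ℕ, (Q ε / 2) ^ v / (Nat.factorial v) * Real.exp (-Q ε / 2) * p v)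
      (∑' v : ℕ, (((v:ℝ) * (Q 0 / 2)^(v-1) * (Q' 0 / 2)) / (Nat.factorial v) *
          Real.exp (-Q 0 / 2)
        + (Q 0 / 2) ^ v / (Nat.factorial v) * (Real.exp (-Q 0 / 2) * (-Q' 0 / 2))) * p v)
      0 := by
  have hball : (0:ℝ) ∈ Metric.ball (0:ℝ) 1 := Metric.mem_ball_self one_pos
  have hC0 : 0 ≤ C := le_trans (abs_nonneg _) (hQ'C 0 hball)
  have hB0 : 0 ≤ B := le_trans (hQnn 0) (hQB 0 hball)
  have hg : ∀ (v : ℕ), ∀ ε ∈ Metric.ball (0:ℝ) 1, HasDerivAt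
      (fun ε : ℝ => (Q ε / 2) ^ v / (Nat.factorial v) * Real.exp (-Q ε / 2) * p v)
      ((((v:ℝ) * (Q ε / 2)^(v-1) * (Q' ε / 2)) / (Nat.factorial v) * Real.exp (-Q ε / 2)
        + (Q ε / 2) ^ v / (Nat.factorial v) * (Real.exp (-Q ε / 2) * (-Q' ε / 2))) * p v)
      ε := by
    intro v ε _
    have hhalf : HasDerivAt (fun ε => Q ε / 2) (Q' ε / 2) ε := (hQd ε).div_const 2
    have hpow : HasDerivAt (fun ε => (Q ε / 2) ^ v / (Nat.factorial v))
        (((v:ℝ) * (Q ε / 2)^(v-1) * (Q' ε / 2)) / (Nat.factorial v)) ε :=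
      (hhalf.pow v).div_const _
    have hexp : HasDerivAt (fun ε => Real.exp (-Q ε / 2))
        (Real.exp (-Q ε / 2) * (-Q' ε / 2)) ε :=
      (((hQd ε).neg).div_const 2).exp
    exact (hpow.mul hexp).mul_const (p v)
  have hM : Summable (fun v : ℕ =>
      (v:ℝ) * (B/2)^(v-1) / (Nat.factorial v) * (C/2) + (B/2)^v / (Nat.factorial v) * (C/2)) :=
    ((summable_aux (B/2)).mul_right (C/2)).add
      ((Real.summable_pow_div_factorial (B/2)).mul_right (C/2))
  have hbound : ∀ (v : ℕ), ∀ ε ∈ Metric.ball (0:ℝ) 1,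
      ‖(((v:ℝ) * (Q ε / 2)^(v-1) * (Q' ε / 2)) / (Nat.factorial v) * Real.exp (-Q ε / 2)
        + (Q ε / 2) ^ v / (Nat.factorial v) * (Real.exp (-Q ε / 2) * (-Q' ε / 2))) * p v‖
      ≤ (v:ℝ) * (B/2)^(v-1) / (Nat.factorial v) * (C/2) + (B/2)^v / (Nat.factorial v) * (C/2) := by
    intro v ε hε
    have hQ0 : 0 ≤ Q ε := hQnn ε
    have hQB' : Q ε ≤ B := hQB ε hε
    have hsB : Q ε / 2 ≤ B / 2 := by linarith
    have hs0 : 0 ≤ Q ε / 2 := by linarith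
    have hD : |Q' ε / 2| ≤ C / 2 := by
      rw [abs_div, abs_two]
      gcongr
      exact hQ'C ε hε
    have hD' : |-Q' ε / 2| ≤ C / 2 := by
      rw [abs_div, abs_neg, abs_two]
      gcongr
      exact hQ'C ε hε
    have he1 : Real.exp (-Q ε / 2) ≤ 1 := Real.exp_le_one_iff.mpr (by linarith)
    have he0 : 0 < Real.exp (-Q ε / 2) := Real.exp_pos _
    have hpv : |p v| ≤ 1 := abs_le.mpr ⟨by linarith [(hp v).1], (hp v).2⟩
    rw [Real.norm_eq_abs, abs_mul]
    have hT1 : |((v:ℝ) * (Q ε / 2)^(v-1) * (Q' ε / 2)) / (Nat.factorial v) *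
        Real.exp (-Q ε / 2)| ≤ (v:ℝ) * (B/2)^(v-1) / (Nat.factorial v) * (C/2) := by
      rw [abs_mul, abs_of_pos he0, abs_div, abs_mul, abs_mul,
        abs_of_nonneg (by positivity : (0:ℝ) ≤ (v:ℝ)),
        abs_of_nonneg (by positivity : (0:ℝ) ≤ (Q ε / 2)^(v-1)),
        abs_of_nonneg (by positivity : (0:ℝ) ≤ ((Nat.factorial v : ℝ)))]
      calc (v:ℝ) * (Q ε / 2)^(v-1) * |Q' ε / 2| / (Nat.factorial v) * Real.exp (-Q ε / 2)
          ≤ (v:ℝ) * (B/2)^(v-1) * (C/2) / (Nat.factorial v) * 1 := by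
            gcongr
        _ = (v:ℝ) * (B/2)^(v-1) / (Nat.factorial v) * (C/2) := by ring
    have hT2 : |(Q ε / 2) ^ v / (Nat.factorial v) * (Real.exp (-Q ε / 2) * (-Q' ε / 2))|
        ≤ (B/2)^v / (Nat.factorial v) * (C/2) := by
      rw [abs_mul, abs_mul, abs_div, abs_of_pos he0,
        abs_of_nonneg (by positivity : (0:ℝ) ≤ (Q ε / 2)^v),
        abs_of_nonneg (by positivity : (0:ℝ) ≤ ((Nat.factorial v : ℝ)))]
      calc (Q ε / 2)^v / (Nat.factorial v) * (Real.exp (-Q ε / 2) * |-Q' ε / 2|)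
          ≤ (B/2)^v / (Nat.factorial v) * (1 * (C/2)) := by
            gcongr
        _ = (B/2)^v / (Nat.factorial v) * (C/2) := by ring
    calc |((v:ℝ) * (Q ε / 2)^(v-1) * (Q' ε / 2)) / (Nat.factorial v) * Real.exp (-Q ε / 2)
        + (Q ε / 2) ^ v / (Nat.factorial v) * (Real.exp (-Q ε / 2) * (-Q' ε / 2))| * |p v|
        ≤ (|((v:ℝ) * (Q ε / 2)^(v-1) * (Q' ε / 2)) / (Nat.factorial v) * Real.exp (-Q ε / 2)|
          + |(Q ε / 2) ^ v / (Nat.factorial v) * (Real.exp (-Q ε / 2) * (-Q' ε / 2))|) * 1 := by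
          gcongr
          exact abs_add_le _ _
      _ ≤ _ := by rw [mul_one]; linarith
  have hsum0 : Summable (fun v : ℕ =>
      (Q 0 / 2) ^ v / (Nat.factorial v) * Real.exp (-Q 0 / 2) * p v) := by
    apply Summable.of_nonneg_of_le (fun v => ?_) (fun v => ?_)
      (Real.summable_pow_div_factorial (Q 0 / 2))
    · have hq : 0 ≤ Q 0 := hQnn 0
      have := (hp v).1
      positivity
    · have hq : 0 ≤ Q 0 := hQnn 0
      calc (Q 0 / 2) ^ v / (Nat.factorial v) * Real.exp (-Q 0 / 2) * p v
          ≤ (Q 0 / 2) ^ v / (Nat.factorial v) * 1 * 1 := by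
            gcongr <;> first
              | exact (hp v).1
              | exact (hp v).2
              | exact Real.exp_le_one_iff.mpr (by linarith)
              | positivity
        _ = (Q 0 / 2) ^ v / (Nat.factorial v) := by ring
  exact hasDerivAt_tsum_of_isPreconnected hM Metric.isOpen_ball
    (convex_ball (0:ℝ) 1).isPreconnected hg hbound hball hsum0 hball
lemma term_eq (a : ℝ) (ha : 0 < a) (v : ℕ) :
    a ^ ((v : ℤ) - 1) * (2 : ℝ) ^ (-(v : ℤ)) * (2 * (v : ℝ) - a)
      = (v : ℝ) * (a / 2) ^ (v - 1) - (a / 2) ^ v := by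
  have ha' : a ≠ 0 := ne_of_gt ha
  cases v with
  | zero => simp [_root_.zpow_neg, zpow_one, div_pow]; field_simp
  | succ n =>
    have h0 : ((n + 1 : ℕ) : ℤ) - 1 = (n : ℤ) := by push_cast; ring
    rw [h0, Nat.add_sub_cancel, zpow_natCast]
    rw [show (-((n + 1 : ℕ) : ℤ)) = -(((n:ℤ)) + 1) by push_cast; ring]
    rw [_root_.zpow_neg, div_pow, div_pow]
    push_cast
    have h2 : (2:ℝ) ^ ((n:ℤ) + 1) = 2 ^ (n + 1) := by
      rw [show ((n:ℤ) + 1) = ((n + 1 : ℕ) : ℤ) by push_cast; ring, zpow_natCast]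
    rw [h2]
    have h3 : (2:ℝ) ^ (n+1) ≠ 0 := by positivity
    field_simp
    ring

/-- The power influence function of the Wald-type test: with
`q(ε) = (u + εw)ᵀ A (u + εw)`, `β(ε) = Σ_v (q(ε)/2)^v/v! · e^{−q(ε)/2} · p_v`
is differentiable at `ε = 0` with derivative `C*(s₀) · uᵀ A w`, where `s₀ = uᵀ A u > 0`
and `C*(s) = e^{−s/2} Σ_v s^{v−1} 2^{−v} (2v − s) p_v / v!`. -/
theorem power_influence_function_formula
    (r : ℕ) (hr : 1 ≤ r)
    (A : Matrix (Fin r) (Fin r) ℝ) (hAsym : A.IsSymm) (hApsd : A.PosSemidef)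
    (u w : Fin r → ℝ) (hs₀ : 0 < u ⬝ᵥ A.mulVec u)
    (p : ℕ → ℝ) (hp : ∀ v, 0 ≤ p v ∧ p v ≤ 1) :
    HasDerivAt
      (fun ε : ℝ => ∑' v : ℕ,
        (((u + ε • w) ⬝ᵥ A.mulVec (u + ε • w)) / 2) ^ v / (Nat.factorial v) *
          Real.exp (-((u + ε • w) ⬝ᵥ A.mulVec (u + ε • w)) / 2) * p v)
      ((Real.exp (-(u ⬝ᵥ A.mulVec u) / 2) *
          ∑' v : ℕ, (u ⬝ᵥ A.mulVec u) ^ ((v : ℤ) - 1) * (2 : ℝ) ^ (-(v : ℤ)) *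
            (2 * (v : ℝ) - u ⬝ᵥ A.mulVec u) * p v / (Nat.factorial v)) *
        (u ⬝ᵥ A.mulVec w))
      0 := by
  set a : ℝ := u ⬝ᵥ A.mulVec u with hadef
  set b : ℝ := u ⬝ᵥ A.mulVec w with hbdef
  have hc : w ⬝ᵥ A.mulVec w = w ⬝ᵥ A.mulVec w := rfl
  -- symmetry
  have hsymm : w ⬝ᵥ A.mulVec u = u ⬝ᵥ A.mulVec w := by
    rw [Matrix.dotProduct_mulVec, ← Matrix.mulVec_transpose, hAsym.eq, dotProduct_comm,
      Matrix.dotProduct_mulVec, ← Matrix.mulVec_transpose, hAsym.eq]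
  have hexpand : ∀ ε : ℝ, (u + ε • w) ⬝ᵥ A.mulVec (u + ε • w)
      = a + 2 * b * ε + (w ⬝ᵥ A.mulVec w) * ε ^ 2 := by
    intro ε
    simp only [Matrix.mulVec_add, Matrix.mulVec_smul, add_dotProduct,
      dotProduct_add, smul_dotProduct, dotProduct_smul, smul_eq_mul,
      hsymm, ← hadef, ← hbdef]
    ring
  set c : ℝ := w ⬝ᵥ A.mulVec w with hcdef
  have hnn : ∀ ε : ℝ, 0 ≤ a + 2 * b * ε + c * ε ^ 2 := by
    intro ε
    rw [← hexpand ε]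
    have := hApsd.dotProduct_mulVec_nonneg (u + ε • w)
    simpa using this
  have hfun : (fun ε : ℝ => ∑' v : ℕ,
        (((u + ε • w) ⬝ᵥ A.mulVec (u + ε • w)) / 2) ^ v / (Nat.factorial v) *
          Real.exp (-((u + ε • w) ⬝ᵥ A.mulVec (u + ε • w)) / 2) * p v)
      = (fun ε : ℝ => ∑' v : ℕ,
        ((a + 2 * b * ε + c * ε ^ 2) / 2) ^ v / (Nat.factorial v) *
          Real.exp (-(a + 2 * b * ε + c * ε ^ 2) / 2) * p v) := by
    funext ε
    rw [hexpand ε]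
  rw [hfun]
  -- derivative of Q
  have hQd : ∀ ε : ℝ, HasDerivAt (fun ε : ℝ => a + 2 * b * ε + c * ε ^ 2)
      ((fun ε : ℝ => 2 * b + 2 * c * ε) ε) ε := by
    intro ε
    have h1 : HasDerivAt (fun ε : ℝ => a + 2 * b * ε + c * ε ^ 2)
        (0 + 2 * b * 1 + c * ((2:ℕ) * ε ^ (2 - 1))) ε :=
      ((hasDerivAt_const ε a).add ((hasDerivAt_id ε).const_mul (2 * b))).add
        ((hasDerivAt_pow 2 ε).const_mul c)
    convert h1 using 1
    push_cast; ring
  -- bounds on the ball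
  have hQB : ∀ ε ∈ Metric.ball (0:ℝ) 1,
      (fun ε : ℝ => a + 2 * b * ε + c * ε ^ 2) ε ≤ a + 2 * |b| + |c| := by
    intro ε hε
    have hε1 : |ε| ≤ 1 := le_of_lt (by simpa using hε)
    have h1 : 2 * b * ε ≤ 2 * |b| := by
      calc 2 * b * ε ≤ |2 * b * ε| := le_abs_self _
        _ = 2 * |b| * |ε| := by rw [abs_mul, abs_mul]; simp
        _ ≤ 2 * |b| * 1 := by gcongr
        _ = 2 * |b| := by ring
    have h2 : c * ε ^ 2 ≤ |c| := by
      calc c * ε ^ 2 ≤ |c * ε ^ 2| := le_abs_self _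
        _ = |c| * |ε| ^ 2 := by rw [abs_mul, abs_pow]
        _ ≤ |c| * 1 ^ 2 := by gcongr
        _ = |c| := by ring
    show a + 2 * b * ε + c * ε ^ 2 ≤ a + 2 * |b| + |c|
    linarith
  have hQ'C : ∀ ε ∈ Metric.ball (0:ℝ) 1,
      |(fun ε : ℝ => 2 * b + 2 * c * ε) ε| ≤ 2 * |b| + 2 * |c| := by
    intro ε hε
    have hε1 : |ε| ≤ 1 := le_of_lt (by simpa using hε)
    show |2 * b + 2 * c * ε| ≤ 2 * |b| + 2 * |c|
    calc |2 * b + 2 * c * ε| ≤ |2 * b| + |2 * c * ε| := abs_add_le _ _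
      _ = 2 * |b| + 2 * |c| * |ε| := by rw [abs_mul, abs_mul, abs_mul]; simp
      _ ≤ 2 * |b| + 2 * |c| * 1 := by gcongr
      _ = 2 * |b| + 2 * |c| := by ring
  have h := tsum_deriv_general p hp (fun ε : ℝ => a + 2 * b * ε + c * ε ^ 2)
    (fun ε : ℝ => 2 * b + 2 * c * ε) hQd hnn (a + 2 * |b| + |c|) (2 * |b| + 2 * |c|) hQB hQ'C
  convert h using 1
  simp only [mul_zero, add_zero, zero_pow, ne_eq, OfNat.ofNat_ne_zero, not_false_eq_true,
    mul_one]
  have hterm : ∀ v : ℕ,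
      (((v:ℝ) * (a / 2) ^ (v - 1) * (2 * b / 2)) / (Nat.factorial v) * Real.exp (-a / 2)
        + (a / 2) ^ v / (Nat.factorial v) * (Real.exp (-a / 2) * (-(2 * b) / 2))) * p v
      = Real.exp (-a / 2) *
          (a ^ ((v : ℤ) - 1) * (2 : ℝ) ^ (-(v : ℤ)) * (2 * (v : ℝ) - a) * p v /
            (Nat.factorial v)) * b := by
    intro v
    rw [term_eq a hs₀ v]
    ring
  rw [tsum_congr hterm]
  rw [show (fun v : ℕ => Real.exp (-a / 2) *
      (a ^ ((v : ℤ) - 1) * (2 : ℝ) ^ (-(v : ℤ)) * (2 * (v : ℝ) - a) * p v /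
        (Nat.factorial v)) * b)
    = (fun v : ℕ => Real.exp (-a / 2) *
      (a ^ ((v : ℤ) - 1) * (2 : ℝ) ^ (-(v : ℤ)) * (2 * (v : ℝ) - a) * p v /
        (Nat.factorial v)) * b) from rfl]
  rw [tsum_mul_right, tsum_mul_left]
end

section
/- Let U : ℝ → ℝ^k be differentiable in a neighborhood of 0 with derivative U' differentiable at 0, let m : ℝ^k → ℝ^r be twice continuously differentiable with m(U(0)) = 0, and let B be a symmetric r×r real matrix. Define w(ε) = m(U(ε))ᵀ B m(U(ε)). Then w is differentiable in a neighborhood of 0, w'(0) = 0, w' is differentiable at 0, and w''(0) = 2 · vᵀ B v, where v = Dm(U(0))(U'(0)) ∈ ℝ^r; equivalently, w''(0) = 2 · U'(0)ᵀ M B Mᵀ U'(0), where M is the k×r matrix with entries M_{ij} = ∂m_j(U(0))/∂θ_i. -/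
open Filter Topology Matrix

lemma hasDerivAt_dotmul {r : ℕ} (B : Matrix (Fin r) (Fin r) ℝ)
    {f h : ℝ → Fin r → ℝ} {f' h' : Fin r → ℝ} {x : ℝ}
    (hf : HasDerivAt f f' x) (hh : HasDerivAt h h' x) :
    HasDerivAt (fun ε => f ε ⬝ᵥ B.mulVec (h ε))
      (f' ⬝ᵥ B.mulVec (h x) + f x ⬝ᵥ B.mulVec h') x := by
  have key : ∀ i : Fin r, HasDerivAt (fun ε => f ε i * ∑ j, B i j * h ε j)
      (f' i * ∑ j, B i j * h x j + f x i * ∑ j, B i j * h' j) x := by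
    intro i
    exact (hasDerivAt_pi.mp hf i).mul
      (HasDerivAt.fun_sum fun j _ => (hasDerivAt_pi.mp hh j).const_mul (B i j))
  have hsum := HasDerivAt.fun_sum (fun i (_ : i ∈ Finset.univ) => key i)
  have hfun : (fun ε => f ε ⬝ᵥ B.mulVec (h ε))
      = fun ε => ∑ i, f ε i * ∑ j, B i j * h ε j := by
    funext ε; simp [Matrix.mulVec, dotProduct]
  have hder : f' ⬝ᵥ B.mulVec (h x) + f x ⬝ᵥ B.mulVec h'
      = ∑ i, (f' i * ∑ j, B i j * h x j + f x i * ∑ j, B i j * h' j) := by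
    simp [Matrix.mulVec, dotProduct, Finset.sum_add_distrib]
  rw [hfun, hder]
  exact hsum

set_option maxHeartbeats 1000000 in
/-- First- and second-order influence functions of the Wald-type test functional
`w(ε) = m(U(ε))ᵀ B m(U(ε))` along a contamination path `U` with `m(U(0)) = 0`:
`w` is differentiable near `0`, `w'(0) = 0`, `w'` is differentiable at `0`, and
`w''(0) = 2 vᵀ B v` with `v = Dm(U(0))(U'(0))`. -/
theorem wald_functional_influence_functions
    (k r : ℕ) (hk : 1 ≤ k) (hr : 1 ≤ r)
    (U : ℝ → Fin k → ℝ)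
    (hU : ∀ᶠ ε in 𝓝 (0 : ℝ), DifferentiableAt ℝ U ε)
    (hU' : DifferentiableAt ℝ (deriv U) 0)
    (m : (Fin k → ℝ) → Fin r → ℝ) (hm : ContDiff ℝ 2 m)
    (hm0 : m (U 0) = 0)
    (B : Matrix (Fin r) (Fin r) ℝ) (hBsym : B.IsSymm) :
    (∀ᶠ ε in 𝓝 (0 : ℝ),
        DifferentiableAt ℝ (fun ε' : ℝ => m (U ε') ⬝ᵥ B.mulVec (m (U ε'))) ε) ∧
      deriv (fun ε' : ℝ => m (U ε') ⬝ᵥ B.mulVec (m (U ε'))) 0 = 0 ∧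
      DifferentiableAt ℝ (deriv (fun ε' : ℝ => m (U ε') ⬝ᵥ B.mulVec (m (U ε')))) 0 ∧
      deriv (deriv (fun ε' : ℝ => m (U ε') ⬝ᵥ B.mulVec (m (U ε')))) 0 =
        2 * (fderiv ℝ m (U 0) (deriv U 0) ⬝ᵥ B.mulVec (fderiv ℝ m (U 0) (deriv U 0))) := by
  have hmdiff : Differentiable ℝ m := hm.differentiable (by norm_num)
  set g : ℝ → Fin r → ℝ := fun ε => m (U ε) with hg
  set G : ℝ → Fin r → ℝ := fun ε => fderiv ℝ m (U ε) (deriv U ε) with hG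
  set w : ℝ → ℝ := fun ε => g ε ⬝ᵥ B.mulVec (g ε) with hw
  -- g has derivative G wherever U is differentiable
  have hgd : ∀ ε : ℝ, DifferentiableAt ℝ U ε → HasDerivAt g (G ε) ε := by
    intro ε hUd
    exact (hmdiff (U ε)).hasFDerivAt.comp_hasDerivAt ε hUd.hasDerivAt
  -- w has derivative D wherever U is differentiable
  have hwd : ∀ ε : ℝ, DifferentiableAt ℝ U ε →
      HasDerivAt w (G ε ⬝ᵥ B.mulVec (g ε) + g ε ⬝ᵥ B.mulVec (G ε)) ε := by
    intro ε hUd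
    exact hasDerivAt_dotmul B (hgd ε hUd) (hgd ε hUd)
  have hwdiff : ∀ᶠ ε in 𝓝 (0 : ℝ), DifferentiableAt ℝ w ε :=
    hU.mono fun ε hε => (hwd ε hε).differentiableAt
  have hU0 : DifferentiableAt ℝ U 0 := hU.self_of_nhds
  -- deriv w agrees eventually with D
  set D : ℝ → ℝ := fun ε => G ε ⬝ᵥ B.mulVec (g ε) + g ε ⬝ᵥ B.mulVec (G ε) with hD
  have hderivw : deriv w =ᶠ[𝓝 (0 : ℝ)] D :=
    hU.mono fun ε hε => (hwd ε hε).deriv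
  -- deriv w 0 = 0
  have hw0 : deriv w 0 = 0 := by
    rw [(hwd 0 hU0).deriv]
    simp [hg, hm0]
  -- G differentiable at 0
  have hGdiff : DifferentiableAt ℝ G 0 := by
    have h1 : DifferentiableAt ℝ (fun ε => fderiv ℝ m (U ε)) 0 := by
      have : Differentiable ℝ (fderiv ℝ m) :=
        (hm.fderiv_right (show (1:WithTop ℕ∞)+1 ≤ 2 by norm_num)).differentiable one_ne_zero
      exact (this (U 0)).comp 0 hU0
    exact h1.clm_apply hU'
  -- g differentiable at 0, deriv g 0 = G 0
  have hg0 : HasDerivAt g (G 0) 0 := hgd 0 hU0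
  obtain ⟨G', hG'⟩ : ∃ G', HasDerivAt G G' 0 := ⟨deriv G 0, hGdiff.hasDerivAt⟩
  have hDd := (hasDerivAt_dotmul B hG' hg0).fun_add (hasDerivAt_dotmul B hg0 hG')
  refine ⟨hwdiff, hw0, ?_, ?_⟩
  · exact (Filter.EventuallyEq.differentiableAt_iff hderivw).mpr hDd.differentiableAt
  · rw [hderivw.deriv_eq, hDd.deriv]
    have hg00 : g 0 = 0 := hm0
    rw [hg00]
    simp only [Matrix.mulVec_zero, dotProduct_zero, zero_dotProduct, add_zero, zero_add]
    ring
end
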